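/- Let α be in NC(n). Then the map β ↦ {V block of α : V is β-special} is injective from the set {β ∈ NC(n) : β ≫ α} into the set of subsets of the set of blocks of α, and its image equals the collection of those sets of blocks of α which contain all outer blocks of α. -/
import Mathlib


open scoped Classical

/-- The minimum of a finset of naturals (`0` if empty). -/
noncomputable def fmin (A : Finset ℕ) : ℕ := sInf (A : Set ℕ)

/-- The maximum of a finset of naturals (`0` if empty). -/
noncomputable def fmax (A : Finset ℕ) : ℕ := sSup (A : Set ℕ)

/-- `α` is a partition of the finite set `F ⊆ ℕ`. -/
def IsPartitionOfSet (F : Finset ℕ) (α : Finset (Finset ℕ)) : Prop :=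
  (∀ V ∈ α, V.Nonempty) ∧ (∀ V ∈ α, V ⊆ F) ∧ (∀ m ∈ F, ∃ V ∈ α, m ∈ V) ∧
    ∀ V ∈ α, ∀ W ∈ α, V ≠ W → V ∩ W = ∅

/-- `α` is a partition of `{1,…,n}`. -/
def IsPartitionOf (n : ℕ) (α : Finset (Finset ℕ)) : Prop :=
  IsPartitionOfSet (Finset.Icc 1 n) α

/-- Two distinct blocks of the family `π` cross: there are `a < b < c < d` with
`a, c` in one block and `b, d` in a different block. -/
def IsCrossing (π : Finset (Finset ℕ)) : Prop :=
  ∃ A ∈ π, ∃ B ∈ π, A ≠ B ∧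
    ∃ a ∈ A, ∃ b ∈ B, ∃ c ∈ A, ∃ d ∈ B, a < b ∧ b < c ∧ c < d

/-- `α ∈ NC(n)`: a non-crossing partition of `{1,…,n}`. -/
def IsNCPartition (n : ℕ) (α : Finset (Finset ℕ)) : Prop :=
  IsPartitionOf n α ∧ ¬ IsCrossing α

/-- Reverse refinement order `α ≤ β`: every block of `α` is contained in a block of `β`
(equivalently, every block of `β` is a union of blocks of `α`). -/
def Refines (α β : Finset (Finset ℕ)) : Prop := ∀ V ∈ α, ∃ W ∈ β, V ⊆ W

/-- The partial order `α ≪ β`: `α ≤ β` and for every block `W` of `β` there is a block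
`V` of `α` containing both `min W` and `max W`. -/
def LL (α β : Finset (Finset ℕ)) : Prop :=
  Refines α β ∧ ∀ W ∈ β, ∃ V ∈ α, fmin W ∈ V ∧ fmax W ∈ V

/-- A block `V` (of `α`) is `β`-special: some block `W` of `β` has the same min and max. -/
def SpecialBlock (β : Finset (Finset ℕ)) (V : Finset ℕ) : Prop :=
  ∃ W ∈ β, fmin V = fmin W ∧ fmax V = fmax W

/-- `V` is an outer block of `α`: no block of `α` strictly nests around it. -/
def OuterBlock (α : Finset (Finset ℕ)) (V : Finset ℕ) : Prop :=
  ∀ V' ∈ α, ¬ (fmin V' < fmin V ∧ fmax V < fmax V')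

/-- `π` is a linked partition of the finite set `F ⊆ ℕ`. -/
def IsLinkedPartitionOfSet (F : Finset ℕ) (π : Finset (Finset ℕ)) : Prop :=
  (∀ A ∈ π, A.Nonempty) ∧ (∀ A ∈ π, A ⊆ F) ∧ (∀ m ∈ F, ∃ A ∈ π, m ∈ A) ∧
    ∀ A ∈ π, ∀ B ∈ π, A ≠ B →
      A ∩ B = ∅ ∨
        (2 ≤ A.card ∧ 2 ≤ B.card ∧ (A ∩ B).card = 1 ∧ fmin A ≠ fmin B ∧
          ∀ x ∈ A ∩ B, x = fmin A ∨ x = fmin B)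

/-- `π ∈ NCL(F)`: a non-crossing linked partition of the finite set `F`. -/
def IsNCLOfSet (F : Finset ℕ) (π : Finset (Finset ℕ)) : Prop :=
  IsLinkedPartitionOfSet F π ∧ ¬ IsCrossing π

/-- `π ∈ NCL(n)`: a non-crossing linked partition of `{1,…,n}`. -/
def IsNCL (n : ℕ) (π : Finset (Finset ℕ)) : Prop :=
  IsNCLOfSet (Finset.Icc 1 n) π

/-- The number of blocks of `π` containing `m`. -/
noncomputable def coverCount (π : Finset (Finset ℕ)) (m : ℕ) : ℕ :=
  (π.filter fun A => m ∈ A).card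

/-- `m` is singly-covered by `π`: it lies in exactly one block. -/
def SinglyCovered (π : Finset (Finset ℕ)) (m : ℕ) : Prop := coverCount π m = 1

/-- `m` is doubly-covered by `π`: it lies in exactly two blocks. -/
def DoublyCovered (π : Finset (Finset ℕ)) (m : ℕ) : Prop := coverCount π m = 2

/-- The partition `π̂` generated by the blocks of `π`: its blocks are the connected
components of the ground set under the relation of lying in a common block of `π`. -/
noncomputable def genPart (π : Finset (Finset ℕ)) : Finset (Finset ℕ) :=
  (π.sup id).image fun m =>
    (π.sup id).filter fun x =>
      Relation.EqvGen (fun a b => ∃ A ∈ π, a ∈ A ∧ b ∈ A) m x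

/-- The unlinking `π̌` of a linked partition `π`. -/
noncomputable def unlink (π : Finset (Finset ℕ)) : Finset (Finset ℕ) :=
  π.image fun A => if SinglyCovered π (fmin A) then A else A.erase (fmin A)

/-- The block of `α` containing `m` (empty if there is none). -/
noncomputable def blockOf (α : Finset (Finset ℕ)) (m : ℕ) : Finset ℕ :=
  (α.filter fun V => m ∈ V).sup id

/-- The successor of `m` in the cycle on the block `V` (elements in increasing order). -/
noncomputable def nextInBlock (V : Finset ℕ) (m : ℕ) : ℕ :=
  if m = fmax V then fmin V else fmin (V.filter fun x => m < x)

/-- The predecessor of `m` in the cycle on the block `V`. -/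
noncomputable def prevInBlock (V : Finset ℕ) (m : ℕ) : ℕ :=
  if m = fmin V then fmax V else fmax (V.filter fun x => x < m)

/-- The permutation `P_α` associated to a partition `α`, as a function: each block
`{i₁ < i₂ < ⋯ < iₘ}` becomes the cycle `i₁ ↦ i₂ ↦ ⋯ ↦ iₘ ↦ i₁`. -/
noncomputable def permOf (α : Finset (Finset ℕ)) (m : ℕ) : ℕ :=
  if m ∈ blockOf α m then nextInBlock (blockOf α m) m else m

/-- The inverse permutation `P_α⁻¹`, as a function. -/
noncomputable def permOfInv (α : Finset (Finset ℕ)) (m : ℕ) : ℕ :=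
  if m ∈ blockOf α m then prevInBlock (blockOf α m) m else m

/-- The action `τ·α` of a map `τ` on a partition `α = {V₁,…,V_p}`, giving
`{τ(V₁),…,τ(V_p)}`. -/
def mapPart (τ : ℕ → ℕ) (α : Finset (Finset ℕ)) : Finset (Finset ℕ) :=
  α.image fun V => V.image τ

/-- The cycled unlinking `π° := P_{π̂}⁻¹ · π̌`. -/
noncomputable def cycUnlink (π : Finset (Finset ℕ)) : Finset (Finset ℕ) :=
  mapPart (permOfInv (genPart π)) (unlink π)

/-- `NC(n)` as a finset. -/
noncomputable def NCF (n : ℕ) : Finset (Finset (Finset ℕ)) :=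
  ((Finset.Icc 1 n).powerset.powerset).filter (IsNCPartition n)

/-- `NCL(n)` as a finset. -/
noncomputable def NCLF (n : ℕ) : Finset (Finset (Finset ℕ)) :=
  ((Finset.Icc 1 n).powerset.powerset).filter (IsNCL n)

/-- The restriction `π|_E`: the blocks of `π` contained in `E`. -/
def restrictL (π : Finset (Finset ℕ)) (E : Finset ℕ) : Finset (Finset ℕ) :=
  π.filter fun A => A ⊆ E

/-- The partition `β₀` obtained from `β` by leaving blocks of size `≤ 2` intact and
breaking each block `W` with `|W| ≥ 3` into the doubleton `{min W, max W}` together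
with `|W| - 2` singletons. -/
noncomputable def breakBlocks (β : Finset (Finset ℕ)) : Finset (Finset ℕ) :=
  β.biUnion fun W =>
    if W.card ≤ 2 then {W}
    else insert {fmin W, fmax W} ((W \ {fmin W, fmax W}).image fun x => ({x} : Finset ℕ))

section Stmt6Aux

open Finset

lemma fmin_mem {A : Finset ℕ} (h : A.Nonempty) : fmin A ∈ A := by
  have := Nat.sInf_mem (s := (A : Set ℕ)) (by simpa using h)
  simpa [fmin] using this

lemma fmin_le {A : Finset ℕ} {a : ℕ} (ha : a ∈ A) : fmin A ≤ a :=
  Nat.sInf_le (by simpa using ha)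

lemma le_fmax {A : Finset ℕ} {a : ℕ} (ha : a ∈ A) : a ≤ fmax A :=
  le_csSup (A.finite_toSet.bddAbove) (by simpa using ha)

lemma fmax_mem {A : Finset ℕ} (h : A.Nonempty) : fmax A ∈ A := by
  have := Nat.sSup_mem (s := (A : Set ℕ)) (by simpa using h) (A.finite_toSet.bddAbove)
  simpa [fmax] using this

lemma mem_block_eq {n : ℕ} {π : Finset (Finset ℕ)} (h : IsPartitionOf n π)
    {A B : Finset ℕ} (hA : A ∈ π) (hB : B ∈ π) {x : ℕ} (hxA : x ∈ A) (hxB : x ∈ B) :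
    A = B := by
  by_contra hne
  have h0 := h.2.2.2 A hA B hB hne
  have hx : x ∈ A ∩ B := Finset.mem_inter.2 ⟨hxA, hxB⟩
  rw [h0] at hx
  exact absurd hx (Finset.notMem_empty x)

lemma strict_inner {n : ℕ} {π : Finset (Finset ℕ)} (h : IsNCPartition n π)
    {A B : Finset ℕ} (hA : A ∈ π) (hB : B ∈ π) (hne : A ≠ B) {x : ℕ} (hx : x ∈ A)
    (h1 : fmin B < x) (h2 : x < fmax B) : fmin B < fmin A ∧ fmax A < fmax B := by
  have hBne : B.Nonempty := h.1.1 B hB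
  have hminB : fmin B ∈ B := fmin_mem hBne
  have hmaxB : fmax B ∈ B := fmax_mem hBne
  have hAne : A.Nonempty := h.1.1 A hA
  have hminA : fmin A ∈ A := fmin_mem hAne
  have hmaxA : fmax A ∈ A := fmax_mem hAne
  constructor
  · by_contra hc
    push_neg at hc
    have hlt : fmin A < fmin B :=
      lt_of_le_of_ne hc (fun he => hne (mem_block_eq h.1 hA hB hminA (by rw [he]; exact hminB)))
    exact h.2 ⟨A, hA, B, hB, hne, fmin A, hminA, fmin B, hminB, x, hx, fmax B, hmaxB, hlt, h1, h2⟩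
  · by_contra hc
    push_neg at hc
    have hlt : fmax B < fmax A :=
      lt_of_le_of_ne hc (fun he => hne (mem_block_eq h.1 hA hB (by rw [he]; exact hmaxA) hmaxB))
    exact h.2 ⟨B, hB, A, hA, hne.symm, fmin B, hminB, x, hx, fmax B, hmaxB, fmax A, hmaxA, h1, h2, hlt⟩


lemma nested_of_common {n : ℕ} {π : Finset (Finset ℕ)} (h : IsNCPartition n π)
    {A B : Finset ℕ} (hA : A ∈ π) (hB : B ∈ π) {x : ℕ}
    (h1 : fmin A ≤ x) (h2 : x ≤ fmax A) (h3 : fmin B ≤ x) (h4 : x ≤ fmax B) :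
    (fmin A ≤ fmin B ∧ fmax B ≤ fmax A) ∨ (fmin B ≤ fmin A ∧ fmax A ≤ fmax B) := by
  rcases eq_or_ne A B with rfl | hne
  · exact Or.inl ⟨le_refl _, le_refl _⟩
  have hAne : A.Nonempty := h.1.1 A hA
  have hBne : B.Nonempty := h.1.1 B hB
  rcases le_or_gt (fmin A) (fmin B) with hm | hm
  · -- claim fmax B ≤ fmax A
    left
    refine ⟨hm, ?_⟩
    by_contra hc
    push_neg at hc  -- fmax A < fmax B
    -- fmax A ∈ A, fmin B ≤ x ≤ fmax A < fmax B
    have hxa : fmin B ≤ fmax A := le_trans h3 h2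
    rcases eq_or_lt_of_le hxa with he | hlt
    · exact hne (mem_block_eq h.1 hA hB (fmax_mem hAne) (by rw [← he]; exact fmin_mem hBne))
    · have := strict_inner h hA hB hne (fmax_mem hAne) hlt hc
      exact absurd hm (not_le.2 this.1)
  · right
    refine ⟨le_of_lt hm, ?_⟩
    by_contra hc
    push_neg at hc  -- fmax B < fmax A
    have hxa : fmin A ≤ fmax B := le_trans h1 h4
    rcases eq_or_lt_of_le hxa with he | hlt
    · exact hne (mem_block_eq h.1 hA hB (fmin_mem hAne) (by rw [he]; exact fmax_mem hBne))
    · have := strict_inner h hB hA hne.symm (fmax_mem hBne) hlt hc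
      exact absurd this.1 (not_lt.2 hm.le)

/-- `U` is assigned to `V`: `V ∈ S`, the interval of `V` contains that of `U`, and `V`
is minimal such among members of `S`. -/
def belongsTo (S : Finset (Finset ℕ)) (V U : Finset ℕ) : Prop :=
  V ∈ S ∧ fmin V ≤ fmin U ∧ fmax U ≤ fmax V ∧
    ∀ V' ∈ S, fmin V' ≤ fmin U → fmax U ≤ fmax V' → fmin V' ≤ fmin V ∧ fmax V ≤ fmax V'

/-- The union of the blocks of `α` assigned to `V`. -/
noncomputable def reconBlock (α S : Finset (Finset ℕ)) (V : Finset ℕ) : Finset ℕ :=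
  (α.filter fun U => belongsTo S V U).sup id

/-- The reconstruction of `β` from the set `S` of prospective special blocks. -/
noncomputable def recon (α S : Finset (Finset ℕ)) : Finset (Finset ℕ) :=
  S.image (reconBlock α S)

lemma mem_reconBlock {α S : Finset (Finset ℕ)} {V : Finset ℕ} {x : ℕ} :
    x ∈ reconBlock α S V ↔ ∃ U ∈ α, belongsTo S V U ∧ x ∈ U := by
  simp [reconBlock, Finset.mem_sup, and_assoc]
section Core

variable {n : ℕ} {α S : Finset (Finset ℕ)}

lemma belongsTo_unique (hα : IsNCPartition n α) (hS : S ⊆ α) {V V' U : Finset ℕ}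
    (h1 : belongsTo S V U) (h2 : belongsTo S V' U) : V = V' := by
  have ha := (h1.2.2.2 V' h2.1 h2.2.1 h2.2.2.1).1
  have hb := (h2.2.2.2 V h1.1 h1.2.1 h1.2.2.1).1
  have he : fmin V = fmin V' := le_antisymm hb ha
  exact mem_block_eq hα.1 (hS h1.1) (hS h2.1) (fmin_mem (hα.1.1 V (hS h1.1)))
    (by rw [he]; exact fmin_mem (hα.1.1 V' (hS h2.1)))

lemma belongsTo_self {V : Finset ℕ} (hV : V ∈ S) : belongsTo S V V :=
  ⟨hV, le_refl _, le_refl _, fun _ _ ha hb => ⟨ha, hb⟩⟩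

lemma belongsTo_exists (hα : IsNCPartition n α) (hS : S ⊆ α)
    (houter : ∀ V ∈ α, OuterBlock α V → V ∈ S) {U : Finset ℕ} (hU : U ∈ α) :
    ∃ V, belongsTo S V U := by
  classical
  have hUne : U.Nonempty := hα.1.1 U hU
  have hUm : fmin U ≤ fmax U := fmin_le (fmax_mem hUne)
  have hUC : U ∈ α.filter fun V => fmin V ≤ fmin U ∧ fmax U ≤ fmax V :=
    Finset.mem_filter.2 ⟨hU, le_refl _, le_refl _⟩
  obtain ⟨V₀, hV₀, hmin₀⟩ := Finset.exists_min_image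
    (α.filter fun V => fmin V ≤ fmin U ∧ fmax U ≤ fmax V) fmin ⟨U, hUC⟩
  rw [Finset.mem_filter] at hV₀
  have hout : OuterBlock α V₀ := by
    rintro V'' hV'' ⟨ha, hb⟩
    have hmem : V'' ∈ α.filter fun V => fmin V ≤ fmin U ∧ fmax U ≤ fmax V :=
      Finset.mem_filter.2 ⟨hV'', le_trans ha.le hV₀.2.1, le_trans hV₀.2.2 hb.le⟩
    exact absurd (hmin₀ V'' hmem) (not_le.2 ha)
  have hV₀S : V₀ ∈ S := houter V₀ hV₀.1 hout
  have hV₀C : V₀ ∈ S.filter fun V => fmin V ≤ fmin U ∧ fmax U ≤ fmax V :=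
    Finset.mem_filter.2 ⟨hV₀S, hV₀.2⟩
  obtain ⟨V, hVC, hmax⟩ := Finset.exists_max_image
    (S.filter fun V => fmin V ≤ fmin U ∧ fmax U ≤ fmax V) fmin ⟨V₀, hV₀C⟩
  rw [Finset.mem_filter] at hVC
  refine ⟨V, hVC.1, hVC.2.1, hVC.2.2, ?_⟩
  intro V' hV' ha hb
  have hV'C : V' ∈ S.filter fun V => fmin V ≤ fmin U ∧ fmax U ≤ fmax V :=
    Finset.mem_filter.2 ⟨hV', ha, hb⟩
  have hmm : fmin V' ≤ fmin V := hmax V' hV'C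
  refine ⟨hmm, ?_⟩
  rcases nested_of_common hα (hS hVC.1) (hS hV') hVC.2.1 (hUm.trans hVC.2.2) ha (hUm.trans hb)
    with ⟨p, q⟩ | ⟨p, q⟩
  · have he : fmin V = fmin V' := le_antisymm p hmm
    have : V = V' := mem_block_eq hα.1 (hS hVC.1) (hS hV') (fmin_mem (hα.1.1 V (hS hVC.1)))
      (by rw [he]; exact fmin_mem (hα.1.1 V' (hS hV')))
    rw [this]
  · exact q

lemma reconBlock_interval (hα : IsNCPartition n α) {V : Finset ℕ} {x : ℕ}
    (hx : x ∈ reconBlock α S V) : fmin V ≤ x ∧ x ≤ fmax V := by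
  obtain ⟨U, hU, hb, hxU⟩ := mem_reconBlock.1 hx
  exact ⟨hb.2.1.trans (fmin_le hxU), (le_fmax hxU).trans hb.2.2.1⟩

lemma subset_reconBlock (hS : S ⊆ α) {V : Finset ℕ} (hV : V ∈ S) :
    V ⊆ reconBlock α S V :=
  fun x hx => mem_reconBlock.2 ⟨V, hS hV, belongsTo_self hV, hx⟩

lemma fmin_reconBlock (hα : IsNCPartition n α) (hS : S ⊆ α) {V : Finset ℕ} (hV : V ∈ S) :
    fmin (reconBlock α S V) = fmin V ∧ fmax (reconBlock α S V) = fmax V := by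
  have hVne : V.Nonempty := hα.1.1 V (hS hV)
  have hsub := subset_reconBlock hS hV
  have hne : (reconBlock α S V).Nonempty := hVne.mono hsub
  constructor
  · exact le_antisymm (fmin_le (hsub (fmin_mem hVne)))
      (reconBlock_interval hα (fmin_mem hne)).1
  · exact le_antisymm (reconBlock_interval hα (fmax_mem hne)).2
      (le_fmax (hsub (fmax_mem hVne)))

lemma reconBlock_V_eq (hα : IsNCPartition n α) (hS : S ⊆ α) {V V' : Finset ℕ} {x : ℕ}
    (hx : x ∈ reconBlock α S V) (hx' : x ∈ reconBlock α S V') : V = V' := by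
  obtain ⟨U, hU, hb, hxU⟩ := mem_reconBlock.1 hx
  obtain ⟨U', hU', hb', hxU'⟩ := mem_reconBlock.1 hx'
  have : U = U' := mem_block_eq hα.1 hU hU' hxU hxU'
  subst this
  exact belongsTo_unique hα hS hb hb'

end Core
section Recon

variable {n : ℕ} {α S : Finset (Finset ℕ)}

lemma recon_isNC (hα : IsNCPartition n α) (hS : S ⊆ α)
    (houter : ∀ V ∈ α, OuterBlock α V → V ∈ S) :
    IsNCPartition n (recon α S) := by
  constructor
  · refine ⟨?_, ?_, ?_, ?_⟩
    · intro W hW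
      obtain ⟨V, hV, rfl⟩ := Finset.mem_image.1 hW
      exact (hα.1.1 V (hS hV)).mono (subset_reconBlock hS hV)
    · intro W hW x hx
      obtain ⟨V, hV, rfl⟩ := Finset.mem_image.1 hW
      obtain ⟨U, hU, _, hxU⟩ := mem_reconBlock.1 hx
      exact hα.1.2.1 U hU hxU
    · intro m hm
      obtain ⟨U, hU, hmU⟩ := hα.1.2.2.1 m hm
      obtain ⟨V, hb⟩ := belongsTo_exists hα hS houter hU
      exact ⟨reconBlock α S V, Finset.mem_image_of_mem _ hb.1,
        mem_reconBlock.2 ⟨U, hU, hb, hmU⟩⟩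
    · intro W hW W' hW' hne
      rw [Finset.eq_empty_iff_forall_notMem]
      intro x hx
      rw [Finset.mem_inter] at hx
      obtain ⟨V, hV, rfl⟩ := Finset.mem_image.1 hW
      obtain ⟨V', hV', rfl⟩ := Finset.mem_image.1 hW'
      exact hne (by rw [reconBlock_V_eq hα hS hx.1 hx.2])
  · rintro ⟨A, hA, B, hB, hne, a, ha, b, hb, c, hc, d, hd, hab, hbc, hcd⟩
    obtain ⟨V, hV, rfl⟩ := Finset.mem_image.1 hA
    obtain ⟨V', hV', rfl⟩ := Finset.mem_image.1 hB
    -- c is strictly inside the interval of V'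
    have hbI := reconBlock_interval (S := S) hα hb
    have hdI := reconBlock_interval (S := S) hα hd
    have haI := reconBlock_interval (S := S) hα ha
    have hcI := reconBlock_interval (S := S) hα hc
    have hc1 : fmin V' < c := lt_of_le_of_lt hbI.1 hbc
    have hc2 : c < fmax V' := lt_of_lt_of_le hcd hdI.2
    obtain ⟨Uc, hUc, hbc', hcUc⟩ := mem_reconBlock.1 hc
    have hUcV' : Uc ≠ V' := by
      rintro rfl
      exact hne (by rw [reconBlock_V_eq hα hS hc (subset_reconBlock hS hV' hcUc)])
    have hstr := strict_inner hα hUc (hS hV') hUcV' hcUc hc1 hc2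
    have hmin1 := hbc'.2.2.2 V' hV' hstr.1.le hstr.2.le
    -- b is strictly inside the interval of V
    have hb1 : fmin V < b := lt_of_le_of_lt haI.1 hab
    have hb2 : b < fmax V := lt_of_lt_of_le hbc hcI.2
    obtain ⟨Ub, hUb, hbb', hbUb⟩ := mem_reconBlock.1 hb
    have hUbV : Ub ≠ V := by
      rintro rfl
      exact hne (by rw [reconBlock_V_eq hα hS (subset_reconBlock hS hV hbUb) hb])
    have hstr2 := strict_inner hα hUb (hS hV) hUbV hbUb hb1 hb2
    have hmin2 := hbb'.2.2.2 V hV hstr2.1.le hstr2.2.le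
    have he : fmin V = fmin V' := le_antisymm hmin2.1 hmin1.1
    have hVV' : V = V' := mem_block_eq hα.1 (hS hV) (hS hV')
      (fmin_mem (hα.1.1 V (hS hV))) (by rw [he]; exact fmin_mem (hα.1.1 V' (hS hV')))
    exact hne (by rw [hVV'])

lemma recon_LL (hα : IsNCPartition n α) (hS : S ⊆ α)
    (houter : ∀ V ∈ α, OuterBlock α V → V ∈ S) : LL α (recon α S) := by
  constructor
  · intro U hU
    obtain ⟨V, hb⟩ := belongsTo_exists hα hS houter hU
    exact ⟨reconBlock α S V, Finset.mem_image_of_mem _ hb.1,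
      fun x hx => mem_reconBlock.2 ⟨U, hU, hb, hx⟩⟩
  · intro W hW
    obtain ⟨V, hV, rfl⟩ := Finset.mem_image.1 hW
    have h := fmin_reconBlock hα hS hV
    have hVne : V.Nonempty := hα.1.1 V (hS hV)
    exact ⟨V, hS hV, by rw [h.1]; exact fmin_mem hVne, by rw [h.2]; exact fmax_mem hVne⟩

lemma recon_specials (hα : IsNCPartition n α) (hS : S ⊆ α) :
    (α.filter fun V => SpecialBlock (recon α S) V) = S := by
  ext U
  rw [Finset.mem_filter]
  constructor
  · rintro ⟨hU, W, hW, hmin, hmax⟩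
    obtain ⟨V, hV, rfl⟩ := Finset.mem_image.1 hW
    have h := fmin_reconBlock hα hS hV
    rw [h.1] at hmin
    have : U = V := mem_block_eq hα.1 hU (hS hV) (fmin_mem (hα.1.1 U hU))
      (by rw [hmin]; exact fmin_mem (hα.1.1 V (hS hV)))
    rw [this]; exact hV
  · intro hU
    have h := fmin_reconBlock hα hS hU
    exact ⟨hS hU, reconBlock α S U, Finset.mem_image_of_mem _ hU, h.1.symm, h.2.symm⟩

end Recon
section Inj

variable {n : ℕ} {α β : Finset (Finset ℕ)}

lemma boundary (hβ : IsNCPartition n β) (hl : LL α β) {W : Finset ℕ} (hW : W ∈ β) :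
    ∃ V ∈ α, V ⊆ W ∧ fmin V = fmin W ∧ fmax V = fmax W := by
  obtain ⟨V, hV, hmin, hmax⟩ := hl.2 W hW
  obtain ⟨W', hW', hsub⟩ := hl.1 V hV
  have hWW' : W = W' := mem_block_eq hβ.1 hW hW' (fmin_mem (hβ.1.1 W hW)) (hsub hmin)
  subst hWW'
  exact ⟨V, hV, hsub, le_antisymm (fmin_le hmin) (fmin_le (hsub (fmin_mem ⟨_, hmin⟩))),
    le_antisymm (le_fmax (hsub (fmax_mem ⟨_, hmax⟩))) (le_fmax hmax)⟩

lemma belongsTo_of_subsetW (hα : IsNCPartition n α) (hβ : IsNCPartition n β)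
    {W V U : Finset ℕ} (hW : W ∈ β) (hV : V ∈ α) (hVW : V ⊆ W)
    (hm : fmin V = fmin W) (hx : fmax V = fmax W) (hU : U ∈ α) (hUW : U ⊆ W) :
    belongsTo (α.filter fun V => SpecialBlock β V) V U := by
  have hVS : V ∈ α.filter fun V => SpecialBlock β V :=
    Finset.mem_filter.2 ⟨hV, W, hW, hm, hx⟩
  have hUne : U.Nonempty := hα.1.1 U hU
  refine ⟨hVS, by rw [hm]; exact fmin_le (hUW (fmin_mem hUne)),
    by rw [hx]; exact le_fmax (hUW (fmax_mem hUne)), ?_⟩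
  rintro V' hV' ha hb
  rw [Finset.mem_filter] at hV'
  obtain ⟨W'', hW'', hm2, hx2⟩ := hV'.2
  rcases eq_or_ne W W'' with rfl | hne
  · rw [hm2, ← hm, hx2, ← hx]
    exact ⟨le_refl _, le_refl _⟩
  · have hxW : fmin U ∈ W := hUW (fmin_mem hUne)
    rw [hm2] at ha
    rw [hx2] at hb
    have h1 : fmin W'' < fmin U := lt_of_le_of_ne ha (fun he => hne
      (mem_block_eq hβ.1 hW hW'' hxW (by rw [← he]; exact fmin_mem (hβ.1.1 _ hW''))))
    have h2 : fmin U < fmax W'' := by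
      have hle : fmin U ≤ fmax W'' := (fmin_le (fmax_mem hUne)).trans hb
      exact lt_of_le_of_ne hle (fun he => hne
        (mem_block_eq hβ.1 hW hW'' hxW (by rw [he]; exact fmax_mem (hβ.1.1 _ hW''))))
    have hstr := strict_inner hβ hW hW'' hne hxW h1 h2
    rw [hm2, hm, hx2, hx]
    exact ⟨hstr.1.le, hstr.2.le⟩

lemma eq_recon (hα : IsNCPartition n α) (hβ : IsNCPartition n β) (hl : LL α β) :
    β = recon α (α.filter fun V => SpecialBlock β V) := by
  set S := α.filter fun V => SpecialBlock β V with hSdef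
  have hS : S ⊆ α := Finset.filter_subset _ _
  have key : ∀ W ∈ β, ∀ V ∈ α, V ⊆ W → fmin V = fmin W → fmax V = fmax W →
      W = reconBlock α S V := by
    intro W hW V hV hVW hm hx
    ext y
    rw [mem_reconBlock]
    constructor
    · intro hy
      have hyI : y ∈ Finset.Icc 1 n := hβ.1.2.1 W hW hy
      obtain ⟨U, hU, hyU⟩ := hα.1.2.2.1 y hyI
      obtain ⟨W', hW', hUW'⟩ := hl.1 U hU
      have hWW' : W = W' := mem_block_eq hβ.1 hW hW' hy (hUW' hyU)
      subst hWW'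
      exact ⟨U, hU, belongsTo_of_subsetW hα hβ hW hV hVW hm hx hU hUW', hyU⟩
    · rintro ⟨U, hU, hb, hyU⟩
      obtain ⟨W₂, hW₂, hUW₂⟩ := hl.1 U hU
      obtain ⟨V₂, hV₂, hV₂W₂, hm₂, hx₂⟩ := boundary hβ hl hW₂
      have hb₂ := belongsTo_of_subsetW hα hβ hW₂ hV₂ hV₂W₂ hm₂ hx₂ hU hUW₂
      have hVV₂ : V = V₂ := belongsTo_unique hα hS hb hb₂
      have hWne : W.Nonempty := hβ.1.1 W hW
      have hWW₂ : W = W₂ := mem_block_eq hβ.1 hW hW₂ (fmin_mem hWne)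
        (by rw [← hm, hVV₂, hm₂]; exact fmin_mem (hβ.1.1 _ hW₂))
      rw [hWW₂]
      exact hUW₂ hyU
  ext W
  constructor
  · intro hW
    obtain ⟨V, hV, hVW, hm, hx⟩ := boundary hβ hl hW
    have hVS : V ∈ S := Finset.mem_filter.2 ⟨hV, W, hW, hm, hx⟩
    rw [key W hW V hV hVW hm hx]
    exact Finset.mem_image_of_mem _ hVS
  · intro hW
    obtain ⟨V, hVS, rfl⟩ := Finset.mem_image.1 hW
    obtain ⟨hVα, W', hW', hm, hx⟩ := Finset.mem_filter.1 hVS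
    obtain ⟨V₂, hV₂, hs, hm₂, hx₂⟩ := boundary hβ hl hW'
    have hV₂V : V₂ = V := mem_block_eq hα.1 hV₂ hVα (fmin_mem (hα.1.1 V₂ hV₂))
      (by rw [hm₂, ← hm]; exact fmin_mem (hα.1.1 V hVα))
    subst hV₂V
    rw [← key W' hW' V₂ hV₂ hs hm₂ hx₂]
    exact hW'

end Inj
/-- Let `α ∈ NC(n)`. The map `β ↦ {V block of α : V is β-special}` is
injective on `{β ∈ NC(n) : β ≫ α}`, and its image is the collection of sets of blocks
of `α` containing all outer blocks of `α`. -/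
theorem stmt6 (n : ℕ) (α : Finset (Finset ℕ)) (hα : IsNCPartition n α) :
    Set.InjOn (fun β => α.filter fun V => SpecialBlock β V)
      {β : Finset (Finset ℕ) | IsNCPartition n β ∧ LL α β} ∧
    (fun β => α.filter fun V => SpecialBlock β V) ''
        {β : Finset (Finset ℕ) | IsNCPartition n β ∧ LL α β}
      = {𝒱 : Finset (Finset ℕ) | 𝒱 ⊆ α ∧ ∀ V ∈ α, OuterBlock α V → V ∈ 𝒱} := by
  constructor
  · intro β₁ h₁ β₂ h₂ heq
    rw [eq_recon hα h₁.1 h₁.2, eq_recon hα h₂.1 h₂.2]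
    exact congrArg (recon α) heq
  · ext 𝒱
    simp only [Set.mem_image, Set.mem_setOf_eq]
    constructor
    · rintro ⟨β, ⟨hβ, hl⟩, rfl⟩
      refine ⟨Finset.filter_subset _ _, ?_⟩
      intro V hV hout
      rw [Finset.mem_filter]
      refine ⟨hV, ?_⟩
      obtain ⟨W, hW, hVW⟩ := hl.1 V hV
      obtain ⟨V', hV', hs, hm, hx⟩ := boundary hβ hl hW
      have hVne : V.Nonempty := hα.1.1 V hV
      have h1 : fmin V' ≤ fmin V := by rw [hm]; exact fmin_le (hVW (fmin_mem hVne))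
      have h2 : fmax V ≤ fmax V' := by rw [hx]; exact le_fmax (hVW (fmax_mem hVne))
      have hVV' : V = V' := by
        rcases lt_or_eq_of_le h1 with hlt | he
        · have hnx : ¬ fmax V < fmax V' := fun hh => hout V' hV' ⟨hlt, hh⟩
          have hxe : fmax V = fmax V' := le_antisymm h2 (not_lt.1 hnx)
          exact mem_block_eq hα.1 hV hV' (fmax_mem hVne)
            (by rw [hxe]; exact fmax_mem (hα.1.1 V' hV'))
        · exact mem_block_eq hα.1 hV hV' (fmin_mem hVne)
            (by rw [← he]; exact fmin_mem (hα.1.1 V' hV'))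
      exact ⟨W, hW, by rw [hVV']; exact hm, by rw [hVV']; exact hx⟩
    · rintro ⟨h1, h2⟩
      exact ⟨recon α 𝒱, ⟨recon_isNC hα h1 h2, recon_LL hα h1 h2⟩, recon_specials hα h1⟩
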